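/- Let f₁, f₂ : ℝ → ℝ be continuous with f₂(z) − f₁(z) → −∞ as z → −∞ and f₂(z) − f₁(z) → +∞ as z → +∞. Define S f(x) = sup_{z ≤ x}[f₂(z) − f₁(z)]. Then for every x there exists z₀ ≥ x with f₂(z₀) − f₁(z₀) = S f(z₀) = S f(x); consequently f₁(x) + S f(x) + sup_{z ≥ x}[f₂(z) − f₁(z) − 2 S f(z)] = f₁(x). -/

import Mathlib

/-- The running supremum `S f (x) = sup_{z ≤ x} [f₂(z) − f₁(z)]`. -/
noncomputable def runningSup (f₁ f₂ : ℝ → ℝ) (x : ℝ) : ℝ :=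
  sSup ((fun z => f₂ z - f₁ z) '' Set.Iic x)

/-- For continuous `f₁, f₂` with `f₂ − f₁ → −∞` at `−∞` and `→ +∞` at `+∞`:
for every `x` there is `z₀ ≥ x` where `f₂ − f₁` attains the running supremum and the
running supremum has not increased, and consequently
`f₁(x) + S f(x) + sup_{z ≥ x}[f₂(z) − f₁(z) − 2 S f(z)] = f₁(x)`. -/
theorem runningSup_attained_and_coPitman_identity (f₁ f₂ : ℝ → ℝ)
    (hc₁ : Continuous f₁) (hc₂ : Continuous f₂)
    (hbot : Filter.Tendsto (fun z => f₂ z - f₁ z) Filter.atBot Filter.atBot)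
    (htop : Filter.Tendsto (fun z => f₂ z - f₁ z) Filter.atTop Filter.atTop) :
    ∀ x : ℝ,
      (∃ z₀, x ≤ z₀ ∧ f₂ z₀ - f₁ z₀ = runningSup f₁ f₂ z₀ ∧
        runningSup f₁ f₂ z₀ = runningSup f₁ f₂ x) ∧
      f₁ x + runningSup f₁ f₂ x +
          sSup ((fun z => f₂ z - f₁ z - 2 * runningSup f₁ f₂ z) '' Set.Ici x) = f₁ x := by
  set g : ℝ → ℝ := fun z => f₂ z - f₁ z with hgdef
  have hgc : Continuous g := hc₂.sub hc₁
  set S : ℝ → ℝ := runningSup f₁ f₂ with hSdef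
  have hSval : ∀ y, S y = sSup (g '' Set.Iic y) := fun y => rfl
  -- boundedness above of the image sets
  have hbdd : ∀ y : ℝ, BddAbove (g '' Set.Iic y) := by
    intro y
    obtain ⟨a, ha⟩ := Filter.eventually_atBot.1 (hbot.eventually (Filter.eventually_le_atBot 0))
    obtain ⟨M, hM⟩ := (isCompact_Icc (a := a) (b := y)).bddAbove_image hgc.continuousOn
    refine ⟨max 0 M, ?_⟩
    rintro _ ⟨z, hz, rfl⟩
    rcases le_total z a with h | h
    · exact le_trans (ha z h) (le_max_left _ _)
    · exact le_trans (hM ⟨z, ⟨h, hz⟩, rfl⟩) (le_max_right _ _)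
  have hne : ∀ y : ℝ, (g '' Set.Iic y).Nonempty :=
    fun y => ⟨g y, Set.mem_image_of_mem _ Set.self_mem_Iic⟩
  have hle : ∀ z, g z ≤ S z := fun z => le_csSup (hbdd z) ⟨z, Set.self_mem_Iic, rfl⟩
  have hmono : ∀ {u v : ℝ}, u ≤ v → S u ≤ S v := fun {u v} h =>
    csSup_le_csSup (hbdd v) (hne u) (Set.image_mono (Set.Iic_subset_Iic.2 h))
  intro x
  -- a point b ≥ x with g b ≥ S x
  obtain ⟨b, hb1, hb2⟩ :=
    ((htop.eventually_ge_atTop (S x)).and (Filter.eventually_ge_atTop x)).exists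
  -- the first point ≥ x where g reaches level S x
  set A : Set ℝ := {z : ℝ | x ≤ z ∧ S x ≤ g z} with hAdef
  have hA_closed : IsClosed A :=
    (isClosed_le continuous_const continuous_id).inter (isClosed_le continuous_const hgc)
  have hA_ne : A.Nonempty := ⟨b, hb2, hb1⟩
  have hA_bdd : BddBelow A := ⟨x, fun z hz => hz.1⟩
  set z₀ : ℝ := sInf A with hz₀def
  have hz₀A : z₀ ∈ A := hA_closed.csInf_mem hA_ne hA_bdd
  have hxz₀ : x ≤ z₀ := hz₀A.1
  have h1 : S x ≤ g z₀ := hz₀A.2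
  -- g z₀ ≤ S x
  have h2 : g z₀ ≤ S x := by
    by_contra hcon
    push_neg at hcon
    rcases eq_or_lt_of_le hxz₀ with heq | hlt
    · rw [← heq] at hcon
      exact absurd (hle x) (not_le.2 hcon)
    · -- z₀ > x; find a point of A strictly below z₀
      have hopen : g ⁻¹' Set.Ioi (S x) ∈ nhds z₀ :=
        (isOpen_Ioi.preimage hgc).mem_nhds hcon
      obtain ⟨ε, hε, hball⟩ := Metric.mem_nhds_iff.1 hopen
      set z : ℝ := max x (z₀ - ε / 2) with hzdef
      have hz_lt : z < z₀ := max_lt hlt (by linarith)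
      have hz_mem : z ∈ Metric.ball z₀ ε := by
        have h1' : z₀ - z ≤ ε / 2 := by
          have := le_max_right x (z₀ - ε / 2); linarith
        rw [Metric.mem_ball, Real.dist_eq, abs_sub_lt_iff]
        constructor <;> linarith
      have hzA : z ∈ A := ⟨le_max_left _ _, le_of_lt (hball hz_mem)⟩
      exact absurd (csInf_le hA_bdd hzA) (not_le.2 hz_lt)
  have hgz₀ : g z₀ = S x := le_antisymm h2 h1
  -- S z₀ = S x
  have hSz₀ : S z₀ = S x := by
    refine le_antisymm ?_ (hmono hxz₀)
    refine csSup_le (hne z₀) ?_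
    rintro _ ⟨z, hz, rfl⟩
    by_contra hcon
    push_neg at hcon
    rcases le_total z x with hzx | hzx
    · exact absurd (le_csSup (hbdd x) ⟨z, hzx, rfl⟩) (not_le.2 hcon)
    · have hzA : z ∈ A := ⟨hzx, le_of_lt hcon⟩
      have : z₀ ≤ z := csInf_le hA_bdd hzA
      have hz_eq : z = z₀ := le_antisymm hz this
      have hcon' : S x < g z₀ := hz_eq ▸ hcon
      exact absurd hcon' (not_lt.2 h2)
  refine ⟨⟨z₀, hxz₀, by rw [show (f₂ z₀ - f₁ z₀ : ℝ) = g z₀ from rfl, hgz₀, hSz₀], hSz₀⟩, ?_⟩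
  -- the coPitman identity
  have hkey : sSup ((fun z => g z - 2 * S z) '' Set.Ici x) = -(S x) := by
    have hub : ∀ w ∈ (fun z => g z - 2 * S z) '' Set.Ici x, w ≤ -(S x) := by
      rintro _ ⟨z, hz, rfl⟩
      have h1' := hle z
      have h2' := hmono hz
      simp only
      linarith
    refine le_antisymm (csSup_le ⟨_, ⟨z₀, hxz₀, rfl⟩⟩ hub) ?_
    refine le_csSup ⟨-(S x), hub⟩ ⟨z₀, hxz₀, ?_⟩
    simp only [hgz₀, hSz₀]
    ring
  have : sSup ((fun z => f₂ z - f₁ z - 2 * runningSup f₁ f₂ z) '' Set.Ici x) = -(S x) := hkey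
  rw [this]
  ring
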